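/- Assume $(b_n)$ is strictly increasing and log-concave. Then the coefficients satisfy $u_{n,0}=1$ and $u_{n,k} \leq \prod_{j=1}^k \frac{b_{n-2k+j-1}}{b_{n-j} - b_{n-2k+j-2}}$ for $1 \leq k \leq n/2$. -/

import Mathlib

/-- The coefficients `u_{n,k}` of `x^n/(b_0⋯b_{n-1})` in the basis `P_{n-2k}`,
defined via their recurrence (`b_m = 0` for `m < 0`, `u_{n,k} = 0` for `k < 0`). -/
noncomputable def usec (b : ℕ → ℝ) : ℕ → ℕ → ℝ
  | 0, 0 => 1
  | 0, _ + 1 => 0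
  | n + 1, 0 => usec b n 0
  | n + 1, k + 1 =>
      ((if 2 * (k + 1) ≤ n then b (n - 2 * (k + 1)) else 0) * usec b n (k + 1) +
        (if 2 * (k + 1) ≤ n + 1 then b (n + 1 - 2 * (k + 1)) else 0) * usec b n k) / b n

noncomputable def Pp (b : ℕ → ℝ) (n k : ℕ) : ℝ :=
  ∏ j ∈ Finset.range k,
    b (n - 2 * k + j) /
      (b (n - (j + 1)) - (if 2 * k + 1 ≤ n + j then b (n + j - (2 * k + 1)) else 0))

lemma ratio (b : ℕ → ℝ) (hb : ∀ n, 0 < b n)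
    (hlc : ∀ n : ℕ, b n * b (n + 2) ≤ b (n + 1) ^ 2) :
    ∀ p m, m ≤ p → b m * b (p + 1) ≤ b (m + 1) * b p := by
  intro p
  induction p with
  | zero =>
    intro m hm
    obtain rfl : m = 0 := Nat.le_zero.mp hm
    linarith [mul_comm (b 0) (b 1)]
  | succ p ih =>
    intro m hm
    rcases Nat.lt_or_ge m (p + 1) with h | h
    · have h1 := ih m (Nat.lt_succ_iff.mp h)
      have h2 := hlc p
      nlinarith [hb p, hb (p + 1), hb m, hb (m + 1), mul_pos (hb p) (hb (p + 1))]
    · obtain rfl : m = p + 1 := le_antisymm hm h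
      linarith [mul_comm (b (p + 1)) (b (p + 2))]

lemma usec_zero (b : ℕ → ℝ) : ∀ n, usec b n 0 = 1 := by
  intro n
  induction n with
  | zero => rfl
  | succ n ih => rw [usec, ih]

lemma usec_nonneg (b : ℕ → ℝ) (hb : ∀ n, 0 < b n) : ∀ n k, 0 ≤ usec b n k := by
  intro n
  induction n with
  | zero => intro k; cases k <;> simp [usec]
  | succ n ih =>
    intro k
    cases k with
    | zero => rw [usec_zero]; norm_num
    | succ k =>
      rw [usec]
      apply div_nonneg _ (hb n).le
      apply add_nonneg <;> apply mul_nonneg _ (ih _) <;> split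
      · exact (hb _).le
      · exact le_rfl
      · exact (hb _).le
      · exact le_rfl

lemma usec_big (b : ℕ → ℝ) : ∀ n k, n < 2 * k → usec b n k = 0 := by
  intro n
  induction n with
  | zero => intro k hk; obtain ⟨k', rfl⟩ : ∃ k', k = k' + 1 := ⟨k - 1, by omega⟩; rfl
  | succ n ih =>
    intro k hk
    obtain ⟨k', rfl⟩ : ∃ m, k = m + 1 := ⟨k - 1, by omega⟩
    rw [usec]
    rw [if_neg (by omega), if_neg (by omega)]
    simp

lemma denom_pos (b : ℕ → ℝ) (hb : ∀ n, 0 < b n) (hmono : StrictMono b)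
    {n k j : ℕ} (hj : j < k) (hkn : 2 * k ≤ n) :
    0 < b (n - (j + 1)) - (if 2 * k + 1 ≤ n + j then b (n + j - (2 * k + 1)) else 0) := by
  split
  · exact sub_pos.mpr (hmono (by omega))
  · simpa using hb _

lemma Pp_pos (b : ℕ → ℝ) (hb : ∀ n, 0 < b n) (hmono : StrictMono b)
    {n k : ℕ} (hkn : 2 * k ≤ n) : 0 < Pp b n k := by
  apply Finset.prod_pos
  intro j hj
  exact div_pos (hb _) (denom_pos b hb hmono (Finset.mem_range.mp hj) hkn)

lemma Pp_succ (b : ℕ → ℝ) {n k : ℕ} (hk : 1 ≤ k) (hkn : 2 * k ≤ n + 1) :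
    Pp b (n + 1) k =
      b (n + 1 - 2 * k) / (b n - (if 2 * k ≤ n then b (n - 2 * k) else 0)) *
        Pp b n (k - 1) := by
  obtain ⟨m, rfl⟩ : ∃ m, k = m + 1 := ⟨k - 1, by omega⟩
  simp only [Pp, Nat.add_sub_cancel]
  rw [Finset.prod_range_succ']
  rw [mul_comm]
  congr 1
  · have h2 : (2 * (m + 1) + 1 ≤ n + 1 + 0) ↔ (2 * (m + 1) ≤ n) := by omega
    rw [if_congr h2 rfl rfl]
    have e1 : n + 1 - 2 * (m + 1) + 0 = n + 1 - 2 * (m + 1) := by omega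
    have e2 : n + 1 - (0 + 1) = n := by omega
    have e3 : (if 2 * (m + 1) ≤ n then b (n + 1 + 0 - (2 * (m + 1) + 1)) else 0)
        = (if 2 * (m + 1) ≤ n then b (n - 2 * (m + 1)) else 0) := by
      split
      · congr 1; omega
      · rfl
    rw [e1, e2, e3]
  · apply Finset.prod_congr rfl
    intro j hj
    have hj' := Finset.mem_range.mp hj
    congr 1
    · congr 1; omega
    · congr 1
      · congr 1; omega
      · have h1 : (2 * (m + 1) + 1 ≤ n + 1 + (j + 1)) ↔ (2 * m + 1 ≤ n + j) := by omega
        rw [if_congr h1 rfl rfl]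
        split
        · congr 1; omega
        · rfl

lemma Pp_mono (b : ℕ → ℝ) (hb : ∀ n, 0 < b n) (hmono : StrictMono b)
    (hlc : ∀ n : ℕ, b n * b (n + 2) ≤ b (n + 1) ^ 2)
    {n k : ℕ} (hk : 1 ≤ k) (hkn : 2 * k ≤ n) : Pp b n k ≤ Pp b (n + 1) k := by
  apply Finset.prod_le_prod
  · intro j hj
    exact (div_pos (hb _) (denom_pos b hb hmono (Finset.mem_range.mp hj) hkn)).le
  · intro j hj
    have hj' := Finset.mem_range.mp hj
    have hd1 := denom_pos b hb hmono (j := j) (n := n) (k := k) hj' hkn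
    have hd2 := denom_pos b hb hmono (j := j) (n := n + 1) (k := k) hj' (by omega)
    rw [div_le_div_iff₀ hd1 hd2]
    -- set up indices
    set m := n - 2 * k + j with hm
    have hp : n - (j + 1) + 1 = n + 1 - (j + 1) := by omega
    have hnum1 : n + 1 - 2 * k + j = m + 1 := by omega
    have hifc : (2 * k + 1 ≤ n + 1 + j) := by omega
    have hval2 : n + 1 + j - (2 * k + 1) = m := by omega
    rw [hnum1, if_pos hifc, hval2, ← hp]
    set p := n - (j + 1) with hpd
    have hmp : m < p := by omega
    -- goal: b m * (b (p+1) - b m) ≤ b (m+1) * (b p - if ...)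
    have hr := ratio b hb hlc p m hmp.le
    split
    · -- 2k+1 ≤ n + j, so m ≥ 1
      have hm1 : 1 ≤ m := by omega
      have hval1 : n + j - (2 * k + 1) = m - 1 := by omega
      rw [hval1]
      have hl := hlc (m - 1)
      have e1 : m - 1 + 1 = m := by omega
      have e2 : m - 1 + 2 = m + 1 := by omega
      rw [e1, e2] at hl
      nlinarith [hb (m - 1), hb m, hb (m + 1), hb p, hb (p + 1)]
    · have hm0 : m = 0 := by omega
      rw [hm0] at hr ⊢
      nlinarith [hb 0, hb 1, hb p, hb (p + 1)]

lemma key (b : ℕ → ℝ) (hb : ∀ n, 0 < b n) (hmono : StrictMono b)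
    (hlc : ∀ n : ℕ, b n * b (n + 2) ≤ b (n + 1) ^ 2) :
    ∀ n k, 1 ≤ k → 2 * k ≤ n → usec b n k ≤ Pp b n k := by
  intro n
  induction n with
  | zero => intro k hk hkn; omega
  | succ n ih =>
    intro k hk hkn
    obtain ⟨k', rfl⟩ : ∃ m, k = m + 1 := ⟨k - 1, by omega⟩
    rw [usec, if_pos hkn, div_le_iff₀ (hb n)]
    have huk' : usec b n k' ≤ Pp b n k' := by
      cases k' with
      | zero => rw [usec_zero]; simp [Pp]
      | succ k'' => exact ih _ (by omega) (by omega)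
    have hPs := Pp_succ b (show (1:ℕ) ≤ k' + 1 by omega) hkn
    by_cases hA : 2 * (k' + 1) ≤ n
    · rw [if_pos hA] at hPs ⊢
      have hD : 0 < b n - b (n - 2 * (k' + 1)) := sub_pos.mpr (hmono (by omega))
      have hid : b (n + 1 - 2 * (k' + 1)) * Pp b n k' =
          (b n - b (n - 2 * (k' + 1))) * Pp b (n + 1) (k' + 1) := by
        rw [hPs, Nat.add_sub_cancel]
        field_simp
      have h1 : usec b n (k' + 1) ≤ Pp b (n + 1) (k' + 1) :=
        le_trans (ih _ (by omega) hA) (Pp_mono b hb hmono hlc (by omega) hA)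
      have g1 : b (n - 2 * (k' + 1)) * usec b n (k' + 1) ≤
          b (n - 2 * (k' + 1)) * Pp b (n + 1) (k' + 1) :=
        mul_le_mul_of_nonneg_left h1 (hb _).le
      have g2 : b (n + 1 - 2 * (k' + 1)) * usec b n k' ≤
          b (n + 1 - 2 * (k' + 1)) * Pp b n k' :=
        mul_le_mul_of_nonneg_left huk' (hb _).le
      nlinarith [g1, g2, hid]
    · rw [if_neg hA] at hPs ⊢
      have hid : b (n + 1 - 2 * (k' + 1)) * Pp b n k' = b n * Pp b (n + 1) (k' + 1) := by
        rw [hPs, sub_zero, Nat.add_sub_cancel]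
        field_simp [(hb n).ne']
      have g2 : b (n + 1 - 2 * (k' + 1)) * usec b n k' ≤
          b (n + 1 - 2 * (k' + 1)) * Pp b n k' :=
        mul_le_mul_of_nonneg_left huk' (hb _).le
      nlinarith [g2, hid]

/-- if `(b_n)` is strictly increasing and log-concave, then `u_{n,0}=1` and
`u_{n,k} ≤ ∏_{j=1}^k b_{n-2k+j-1}/(b_{n-j} - b_{n-2k+j-2})` for `1 ≤ k ≤ n/2`
(with `b_m = 0` for `m < 0`; the product below is indexed by `j = 0,…,k-1`,
corresponding to the paper's `j+1 = 1,…,k`). -/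
theorem stmt8 (b : ℕ → ℝ) (hb : ∀ n, 0 < b n) (hmono : StrictMono b)
    (hlc : ∀ n : ℕ, b n * b (n + 2) ≤ b (n + 1) ^ 2) :
    (∀ n : ℕ, usec b n 0 = 1) ∧
    (∀ n k : ℕ, 1 ≤ k → 2 * k ≤ n →
      usec b n k ≤ ∏ j ∈ Finset.range k,
        b (n - 2 * k + j) /
          (b (n - (j + 1)) - (if 2 * k + 1 ≤ n + j then b (n + j - (2 * k + 1)) else 0))) := by
  exact ⟨usec_zero b, fun n k hk hkn => key b hb hmono hlc n k hk hkn⟩
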